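/- arXiv:1811.09090 — 5 statements merged into one kernel-verified Lean document; each statement's English description precedes it below -/
import Mathlib

section
/- For every natural number n with n ≥ 3, there exists a natural number k such that k · ((n − 2) · π / n) = 2 · π if and only if n = 3, n = 4, or n = 6. (Equivalently: among regular polygons, exactly the equilateral triangle, the square and the regular hexagon have an interior angle fitting a whole number of times around a point, which is the arithmetic content of Aristotle's statement in On the Heavens that exactly these three regular figures tile the plane.) -/
/-- Among regular polygons (n ≥ 3), exactly for n = 3, 4, 6 does the interior
angle (n − 2)·π/n fit a whole number of times around a point (k copies sum to 2π). -/
theorem regular_polygon_angle_divides_two_pi (n : ℕ) (hn : 3 ≤ n) :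
    (∃ k : ℕ, (k : ℝ) * (((n : ℝ) - 2) * Real.pi / n) = 2 * Real.pi) ↔
      n = 3 ∨ n = 4 ∨ n = 6 := by
  have hn0 : (n : ℝ) ≠ 0 := by positivity
  have hπ := Real.pi_ne_zero
  constructor
  · rintro ⟨k, hk⟩
    have h1 : (k : ℝ) * ((n : ℝ) - 2) = 2 * n := by
      have := mul_right_cancel₀ hπ (by field_simp at hk; linear_combination Real.pi * hk : ((k:ℝ)*((n:ℝ)-2))*Real.pi = (2*(n:ℝ))*Real.pi)
      linarith
    have h2 : ((k * (n - 2) : ℕ) : ℝ) = ((2 * n : ℕ) : ℝ) := by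
      push_cast [Nat.cast_sub (by omega : 2 ≤ n)]
      linarith
    have h3 : k * (n - 2) = 2 * n := Nat.cast_injective h2
    have hd : (n - 2) ∣ 4 := by
      have d1 : (n - 2) ∣ 2 * n := Dvd.intro k (by rw [← h3, Nat.mul_comm])
      have d2 : (n - 2) ∣ 2 * (n - 2) := ⟨2, by ring⟩
      have : (n - 2) ∣ 2 * n - 2 * (n - 2) := Nat.dvd_sub d1 d2
      have he : 2 * n - 2 * (n - 2) = 4 := by omega
      rwa [he] at this
    have : n - 2 ≤ 4 := Nat.le_of_dvd (by norm_num) hd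
    have hn6 : n ≤ 6 := by omega
    interval_cases n <;> omega
  · rintro (rfl | rfl | rfl)
    · exact ⟨6, by norm_num; ring⟩
    · exact ⟨4, by norm_num; ring⟩
    · exact ⟨3, by norm_num; ring⟩
end

section
/- Let r > 0 and c ≠ 0 be real numbers, and let h : ℝ → ℝł be the cylindrical helix h(t) = (r·cos t, r·sin t, c·t), with image H = {h(t) : t ∈ ℝ} in Euclidean 3-space. Then H is homeomerous: for all real numbers s and t there exists a surjective isometry φ of Euclidean 3-space such that φ maps H onto H and φ(h(s)) = h(t). -/
/-- Screw motion: rotation by θ about the z-axis plus vertical translation by d. -/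
noncomputable def screwMap (θ d : ℝ) (x : EuclideanSpace ℝ (Fin 3)) :
    EuclideanSpace ℝ (Fin 3) :=
  WithLp.toLp 2 ![Real.cos θ * x 0 - Real.sin θ * x 1,
    Real.sin θ * x 0 + Real.cos θ * x 1,
    x 2 + d]

lemma screwMap_apply (θ d : ℝ) (x : EuclideanSpace ℝ (Fin 3)) (i : Fin 3) :
    screwMap θ d x i =
      ![Real.cos θ * x 0 - Real.sin θ * x 1,
        Real.sin θ * x 0 + Real.cos θ * x 1,
        x 2 + d] i := rfl

lemma screwMap_inv (θ d : ℝ) (x : EuclideanSpace ℝ (Fin 3)) :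
    screwMap (-θ) (-d) (screwMap θ d x) = x := by
  ext i
  fin_cases i
  · simp [screwMap, Real.cos_neg, Real.sin_neg]
    linear_combination (x 0) * Real.sin_sq_add_cos_sq θ
  · simp [screwMap, Real.cos_neg, Real.sin_neg]
    linear_combination (x 1) * Real.sin_sq_add_cos_sq θ
  · simp [screwMap]

noncomputable def screwIso (θ d : ℝ) :
    EuclideanSpace ℝ (Fin 3) ≃ᵢ EuclideanSpace ℝ (Fin 3) where
  toFun := screwMap θ d
  invFun := screwMap (-θ) (-d)
  left_inv := screwMap_inv θ d
  right_inv := fun x => by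
    have := screwMap_inv (-θ) (-d) x
    simpa using this
  isometry_toFun := by
    apply Isometry.of_dist_eq
    intro x y
    rw [EuclideanSpace.dist_eq, EuclideanSpace.dist_eq]
    congr 1
    simp only [Fin.sum_univ_three, screwMap_apply, Real.dist_eq,
      Matrix.cons_val_zero, Matrix.cons_val_one, Matrix.head_cons,
      Matrix.cons_val_two, Matrix.tail_cons, sq_abs]
    nlinarith [Real.sin_sq_add_cos_sq θ]

/-- The cylindrical helix is homeomerous: any point of it can be carried to any
other point by a surjective isometry of Euclidean 3-space preserving the helix. -/
theorem cylindrical_helix_homeomerous (r c : ℝ) (hr : 0 < r) (hc : c ≠ 0)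
    (h : ℝ → EuclideanSpace ℝ (Fin 3))
    (hh : ∀ t : ℝ, h t = ![r * Real.cos t, r * Real.sin t, c * t])
    (H : Set (EuclideanSpace ℝ (Fin 3))) (hH : H = Set.range h) :
    ∀ s t : ℝ, ∃ φ : EuclideanSpace ℝ (Fin 3) ≃ᵢ EuclideanSpace ℝ (Fin 3),
      φ '' H = H ∧ φ (h s) = h t := by
  intro s t
  set θ := t - s with hθ
  refine ⟨screwIso θ (c * θ), ?_, ?_⟩
  · have key : ∀ u : ℝ, screwMap θ (c * θ) (h u) = h (u + θ) := by
      intro u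
      ext i
      rw [screwMap_apply, hh u, hh (u + θ)]
      fin_cases i <;>
        simp [screwMap, Real.cos_add, Real.sin_add] <;> ring
    rw [hH]
    ext x
    constructor
    · rintro ⟨y, ⟨u, rfl⟩, rfl⟩
      exact ⟨u + θ, (key u).symm⟩
    · rintro ⟨u, rfl⟩
      exact ⟨h (u - θ), ⟨u - θ, rfl⟩, by rw [show (screwIso θ (c * θ)) (h (u - θ)) =
        screwMap θ (c * θ) (h (u - θ)) from rfl, key (u - θ), sub_add_cancel]⟩
  · show screwMap θ (c * θ) (h s) = h t
    ext i
    rw [screwMap_apply, hh s, hh t]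
    fin_cases i
    · simp [screwMap, hθ, Real.cos_sub, Real.sin_sub]
      linear_combination (Real.cos t * r) * Real.sin_sq_add_cos_sq s
    · simp [screwMap, hθ, Real.cos_sub, Real.sin_sub]
      linear_combination (Real.sin t * r) * Real.sin_sq_add_cos_sq s
    · simp [screwMap, hθ]
      ring
end

section
/- Let a > 0 and let S = {(a·θ·cos θ, a·θ·sin θ) : θ ∈ [0, ∞)} be the Archimedean spiral in the Euclidean plane. Then every surjective isometry φ of the Euclidean plane satisfying φ(S) = S fixes every point of S. In particular, since S has more than one point, S is not homeomerous. -/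
/-- The Archimedean spiral parametrization. -/
noncomputable def archSpiralPt (a θ : ℝ) : EuclideanSpace ℝ (Fin 2) :=
  WithLp.toLp 2 ![a * θ * Real.cos θ, a * θ * Real.sin θ]

lemma archSpiralPt_norm (a θ : ℝ) (ha : 0 ≤ a) (hθ : 0 ≤ θ) : ‖archSpiralPt a θ‖ = a * θ := by
  rw [EuclideanSpace.norm_eq]
  simp only [archSpiralPt, PiLp.toLp_apply, Fin.sum_univ_two, Matrix.cons_val_zero, Matrix.cons_val_one,
    Matrix.head_cons, Real.norm_eq_abs, sq_abs]
  rw [show (a * θ * Real.cos θ) ^ 2 + (a * θ * Real.sin θ) ^ 2 = (a * θ) ^ 2 by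
    nlinarith [Real.sin_sq_add_cos_sq θ]]
  exact Real.sqrt_sq (by positivity)

lemma archSpiralPt_continuous (a : ℝ) : Continuous (archSpiralPt a) := by
  apply (PiLp.continuous_toLp 2 _).comp
  apply continuous_pi
  intro i
  fin_cases i <;> simp [archSpiralPt] <;> fun_prop

lemma archSpiralPt_zero (a : ℝ) : archSpiralPt a 0 = 0 := by
  ext i; fin_cases i <;> simp [archSpiralPt]

/-- Every surjective isometry of the Euclidean plane preserving the Archimedean
spiral fixes it pointwise; in particular the spiral is not homeomerous. -/
theorem archimedean_spiral_not_homeomerous (a : ℝ) (ha : 0 < a)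
    (S : Set (EuclideanSpace ℝ (Fin 2)))
    (hS : S = {p | ∃ θ : ℝ, 0 ≤ θ ∧
      p = WithLp.toLp 2 ![a * θ * Real.cos θ, a * θ * Real.sin θ]}) :
    (∀ φ : EuclideanSpace ℝ (Fin 2) ≃ᵢ EuclideanSpace ℝ (Fin 2),
        φ '' S = S → ∀ p ∈ S, φ p = p) ∧
      ¬ (∀ p ∈ S, ∀ q ∈ S,
          ∃ φ : EuclideanSpace ℝ (Fin 2) ≃ᵢ EuclideanSpace ℝ (Fin 2),
            φ '' S = S ∧ φ p = q) := by
  -- basic facts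
  have hmem : ∀ θ : ℝ, 0 ≤ θ → archSpiralPt a θ ∈ S := by
    intro θ hθ
    rw [hS]
    exact ⟨θ, hθ, rfl⟩
  have hrep : ∀ p ∈ S, ∃ θ : ℝ, 0 ≤ θ ∧ p = archSpiralPt a θ := by
    intro p hp
    rw [hS] at hp
    exact hp
  -- a point of S is determined by its norm
  have huniq : ∀ p ∈ S, ∀ q ∈ S, ‖p‖ = ‖q‖ → p = q := by
    intro p hp q hq hn
    obtain ⟨θ, hθ, rfl⟩ := hrep p hp
    obtain ⟨θ', hθ', rfl⟩ := hrep q hq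
    rw [archSpiralPt_norm a θ ha.le hθ, archSpiralPt_norm a θ' ha.le hθ'] at hn
    have : θ = θ' := by
      have := mul_left_cancel₀ (ne_of_gt ha) hn
      exact this
    rw [this]
  -- injectivity of the parametrization (via norms)
  have hparam_inj : ∀ θ θ' : ℝ, 0 ≤ θ → 0 ≤ θ' →
      archSpiralPt a θ = archSpiralPt a θ' → θ = θ' := by
    intro θ θ' hθ hθ' h
    have := congrArg norm h
    rw [archSpiralPt_norm a θ ha.le hθ, archSpiralPt_norm a θ' ha.le hθ'] at this
    exact mul_left_cancel₀ (ne_of_gt ha) this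
  have main : ∀ φ : EuclideanSpace ℝ (Fin 2) ≃ᵢ EuclideanSpace ℝ (Fin 2),
      φ '' S = S → ∀ p ∈ S, φ p = p := by
    intro φ hφ
    have hφS : ∀ p ∈ S, φ p ∈ S := by
      intro p hp
      rw [← hφ]
      exact Set.mem_image_of_mem φ hp
    have hφS' : ∀ p ∈ S, φ.symm p ∈ S := by
      intro p hp
      rw [← hφ] at hp
      obtain ⟨q, hq, hqp⟩ := hp
      rwa [← hqp, φ.symm_apply_apply]
    -- the origin belongs to S
    have h0S : (0 : EuclideanSpace ℝ (Fin 2)) ∈ S := by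
      have := hmem 0 le_rfl
      rwa [archSpiralPt_zero] at this
    -- there is θ₁ ≥ 0 with φ (spir θ₁) = 0
    obtain ⟨θ₁, hθ₁, hθ₁e⟩ := hrep _ (hφS' 0 h0S)
    have hφθ₁ : φ (archSpiralPt a θ₁) = 0 := by
      rw [← hθ₁e, φ.apply_symm_apply]
    -- the norm function h θ = ‖φ (spir θ)‖
    set h : ℝ → ℝ := fun θ => ‖φ (archSpiralPt a θ)‖ with hh
    have hcont : Continuous h := (continuous_norm.comp φ.continuous).comp
      (archSpiralPt_continuous a)
    have hinj : Set.InjOn h (Set.Icc 0 (θ₁ + 1)) := by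
      intro x hx y hy hxy
      have hx0 : 0 ≤ x := hx.1
      have hy0 : 0 ≤ y := hy.1
      have h1 : φ (archSpiralPt a x) ∈ S := hφS _ (hmem x hx0)
      have h2 : φ (archSpiralPt a y) ∈ S := hφS _ (hmem y hy0)
      have := huniq _ h1 _ h2 hxy
      have := φ.injective this
      exact hparam_inj x y hx0 hy0 this
    have hle : (0 : ℝ) ≤ θ₁ + 1 := by linarith
    have hθ₁mem : θ₁ ∈ Set.Icc (0:ℝ) (θ₁ + 1) := ⟨hθ₁, by linarith⟩
    have hθ₁1mem : θ₁ + 1 ∈ Set.Icc (0:ℝ) (θ₁ + 1) := ⟨by linarith, le_rfl⟩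
    have h0mem : (0:ℝ) ∈ Set.Icc (0:ℝ) (θ₁ + 1) := ⟨le_rfl, hle⟩
    have hhθ₁ : h θ₁ = 0 := by simp [hh, hφθ₁]
    -- h is strictly monotone or antitone on [0, θ₁+1]
    rcases hcont.continuousOn.strictMonoOn_of_injOn_Icc' hle hinj with hmono | hanti
    · -- monotone: θ₁ must be 0, i.e. φ 0 = 0
      have hθ₁0 : θ₁ = 0 := by
        by_contra hne
        have : (0:ℝ) < θ₁ := lt_of_le_of_ne hθ₁ (Ne.symm hne)
        have := hmono h0mem hθ₁mem this
        rw [hhθ₁] at this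
        exact absurd this (not_lt.mpr (norm_nonneg _))
      have hφ0 : φ 0 = 0 := by
        rw [hθ₁0] at hφθ₁
        rwa [archSpiralPt_zero] at hφθ₁
      -- norms are preserved, hence every point of S is fixed
      intro p hp
      have hn : ‖φ p‖ = ‖p‖ := by
        have := φ.isometry.dist_eq p 0
        rw [dist_eq_norm, dist_eq_norm, hφ0] at this
        simpa using this
      exact huniq _ (hφS p hp) _ hp hn
    · -- antitone case is impossible: h (θ₁+1) < h θ₁ = 0
      exfalso
      have := hanti hθ₁mem hθ₁1mem (by linarith)
      rw [hhθ₁] at this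
      exact absurd this (not_lt.mpr (norm_nonneg _))
  refine ⟨main, ?_⟩
  intro habs
  have h0S : (0 : EuclideanSpace ℝ (Fin 2)) ∈ S := by
    have := hmem 0 le_rfl
    rwa [archSpiralPt_zero] at this
  have h1S : archSpiralPt a 1 ∈ S := hmem 1 zero_le_one
  obtain ⟨φ, hφ, hφ0⟩ := habs 0 h0S (archSpiralPt a 1) h1S
  have := main φ hφ 0 h0S
  rw [this] at hφ0
  have := congrArg norm hφ0
  rw [archSpiralPt_norm a 1 ha.le zero_le_one] at this
  simp at this
  linarith
end

section
/- Let φ : ℝ → Isom(ℝł) be a one-parameter group of isometries of Euclidean 3-space, i.e. φ(0) is the identity, φ(s + t) = φ(s) ∘ φ(t) for all s, t ∈ ℝ, and the map (t, x) ↦ φ(t)(x) is continuous. Then for every point x of Euclidean 3-space there exist a real number r ≥ 0, a real number c, and a surjective isometry ψ of Euclidean 3-space such that the orbit {φ(t)(x) : t ∈ ℝ} equals ψ '' {(r·cos t, r·sin t, c·t) : t ∈ ℝ}. In particular every such orbit is a single point, a straight line, a circle, or a cylindrical helix. -/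
set_option maxHeartbeats 1000000
set_option synthInstance.maxHeartbeats 1000000
open scoped RealInnerProductSpace

noncomputable section
abbrev E3 := EuclideanSpace ℝ (Fin 3)

open MeasureTheory intervalIntegral in
theorem part1 (φ : ℝ → (E3 ≃ᵢ E3)) (h0 : φ 0 = IsometryEquiv.refl E3)
    (hadd : ∀ s t : ℝ, ∀ x : E3, φ (s + t) x = φ s (φ t x))
    (hcont : Continuous fun p : ℝ × E3 => φ p.1 p.2) :
    ∃ (K : E3 →L[ℝ] E3) (v : E3), (∀ w : E3, ⟪K w, w⟫ = 0) ∧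
      ∀ y : E3, ∀ t : ℝ, HasDerivAt (fun s => φ s y) (K (φ t y) + v) t := by
  classical
  set T : ℝ → E3 →L[ℝ] E3 :=
    fun t => ((φ t).toRealLinearIsometryEquiv).toLinearIsometry.toContinuousLinearMap with hTdef
  have hT : ∀ t (y : E3), T t y = φ t y - φ t 0 := fun t y => by
    simp [hTdef]
  have hγc : ∀ y : E3, Continuous fun t => φ t y := fun y =>
    hcont.comp (continuous_id.prodMk continuous_const)
  have hTv : ∀ y : E3, Continuous fun t => T t y := fun y => by
    have : (fun t => T t y) = fun t => φ t y - φ t 0 := funext fun t => hT t y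
    rw [this]; exact (hγc y).sub (hγc 0)
  have hTcont : Continuous T := by
    have hrepr : T = fun t => ∑ i : Fin 3,
        (EuclideanSpace.proj i : E3 →L[ℝ] ℝ).smulRight (T t (EuclideanSpace.single i 1)) := by
      funext t
      refine ContinuousLinearMap.ext fun y => ?_
      rw [ContinuousLinearMap.sum_apply]
      conv_lhs => rw [← (EuclideanSpace.basisFun (Fin 3) ℝ).sum_repr y]
      rw [map_sum]
      refine Finset.sum_congr rfl fun i _ => ?_
      rw [_root_.map_smul]
      simp only [ContinuousLinearMap.smulRight_apply,
        EuclideanSpace.basisFun_repr, EuclideanSpace.basisFun_apply]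
      rfl
    rw [hrepr]
    refine continuous_finset_sum _ fun i _ => ?_
    exact ((ContinuousLinearMap.smulRightL ℝ E3 E3 (EuclideanSpace.proj i)).continuous).comp
      (hTv (EuclideanSpace.single i 1))
  have hT0 : T 0 = 1 := by
    refine ContinuousLinearMap.ext fun y => ?_
    rw [hT, h0]
    exact sub_zero y
  obtain ⟨δ, hδ, hball⟩ := Metric.continuousAt_iff.1 hTcont.continuousAt (1/2) (by norm_num)
  set T₀ : ℝ := δ/2 with hT₀def
  have hT₀pos : 0 < T₀ := half_pos hδ
  have hsmall : ∀ s ∈ Set.uIoc (0:ℝ) T₀, ‖T s - 1‖ ≤ 1/2 := by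
    intro s hs
    rw [Set.uIoc_of_le hT₀pos.le] at hs
    have hd : dist s 0 < δ := by
      rw [Real.dist_eq, sub_zero, abs_of_pos hs.1]; linarith [hs.2]
    have := hball hd
    rw [dist_eq_norm, hT0] at this
    linarith
  have hTint : IntervalIntegrable T volume 0 T₀ := hTcont.intervalIntegrable _ _
  set C : E3 →L[ℝ] E3 := ∫ s in (0:ℝ)..T₀, T s with hCdef
  have hCnorm : ‖C - T₀ • 1‖ ≤ 1/2 * T₀ := by
    have he : C - T₀ • (1 : E3 →L[ℝ] E3) = ∫ s in (0:ℝ)..T₀, (T s - 1) := by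
      rw [intervalIntegral.integral_sub hTint (intervalIntegrable_const)]
      simp [hCdef]
    rw [he]
    have := intervalIntegral.norm_integral_le_of_norm_le_const
      (C := 1/2) (f := fun s => T s - 1) (a := 0) (b := T₀) hsmall
    simpa [abs_of_pos hT₀pos] using this
  set D : E3 →L[ℝ] E3 := T₀⁻¹ • C with hDdef
  have hD : ‖(1 : E3 →L[ℝ] E3) - D‖ < 1 := by
    have he : (1 : E3 →L[ℝ] E3) - D = T₀⁻¹ • (T₀ • 1 - C) := by
      rw [smul_sub, smul_smul, inv_mul_cancel₀ hT₀pos.ne', one_smul]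
    rw [he]
    have h1 : ‖T₀⁻¹‖ = T₀⁻¹ := by
      rw [Real.norm_eq_abs, abs_of_pos (inv_pos.2 hT₀pos)]
    calc ‖T₀⁻¹ • (T₀ • (1:E3 →L[ℝ] E3) - C)‖ ≤ ‖T₀⁻¹‖ * ‖T₀ • (1:E3 →L[ℝ] E3) - C‖ :=
          ContinuousLinearMap.opNorm_smul_le _ _
      _ = T₀⁻¹ * ‖C - T₀ • 1‖ := by rw [h1, norm_sub_rev]
      _ ≤ T₀⁻¹ * (1/2 * T₀) := mul_le_mul_of_nonneg_left hCnorm (inv_pos.2 hT₀pos).le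
      _ = 1/2 := by field_simp
      _ < 1 := by norm_num
  set U : (E3 →L[ℝ] E3)ˣ := Units.oneSub ((1 : E3 →L[ℝ] E3) - D) hD with hUdef
  have hU : (U : E3 →L[ℝ] E3) = D := by
    simp [hUdef, Units.oneSub, sub_sub_cancel]
  set Cinv : E3 →L[ℝ] E3 := T₀⁻¹ • ((U⁻¹ : (E3 →L[ℝ] E3)ˣ) : E3 →L[ℝ] E3) with hCinvdef
  have hCinvC : Cinv.comp C = 1 := by
    have hCD : C = T₀ • D := by
      rw [hDdef, smul_smul, mul_inv_cancel₀ hT₀pos.ne', one_smul]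
    rw [hCinvdef, ContinuousLinearMap.smul_comp, hCD, ContinuousLinearMap.comp_smul,
      smul_smul, inv_mul_cancel₀ hT₀pos.ne', one_smul]
    rw [← hU]
    exact Units.inv_mul U
  have hCinv : ∀ z : E3, Cinv (C z) = z := by
    intro z
    have h2 : (Cinv.comp C) z = (1 : E3 →L[ℝ] E3) z := by rw [hCinvC]
    simpa using h2
  set v0 : E3 := ∫ s in (0:ℝ)..T₀, φ s 0 with hv0def
  set K : E3 →L[ℝ] E3 := Cinv.comp (T T₀ - 1) with hKdef
  set v : E3 := Cinv (φ T₀ 0) with hvdef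
  have hrep : ∀ (y : E3) (t : ℝ), φ t y = Cinv ((∫ u in t..(t+T₀), φ u y) - v0) := by
    intro y t
    have hsplit : ∀ s : ℝ, φ (t+s) y = T s (φ t y) + φ s 0 := by
      intro s
      rw [hT, add_comm t s, hadd]
      abel
    have h1 : (∫ s in (0:ℝ)..T₀, φ (t+s) y) = C (φ t y) + v0 := by
      rw [intervalIntegral.integral_congr (g := fun s => T s (φ t y) + φ s 0)
        (fun s _ => hsplit s)]
      rw [intervalIntegral.integral_add ((hTv (φ t y)).intervalIntegrable _ _)
        ((hγc 0).intervalIntegrable _ _)]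
      rw [ContinuousLinearMap.intervalIntegral_apply hTint (φ t y)]
    have h2 : (∫ s in (0:ℝ)..T₀, φ (t+s) y) = ∫ u in t..(t+T₀), φ u y := by
      simpa [add_comm] using intervalIntegral.integral_comp_add_left (fun u => φ u y) t
        (a := 0) (b := T₀)
    rw [← h2, h1, add_sub_cancel_right, hCinv]
  have hderiv : ∀ y : E3, ∀ t : ℝ, HasDerivAt (fun s => φ s y) (K (φ t y) + v) t := by
    intro y t
    have hFint : ∀ a b : ℝ, IntervalIntegrable (fun u => φ u y) volume a b := fun a b =>
      (hγc y).intervalIntegrable _ _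
    have hF : ∀ τ : ℝ, HasDerivAt (fun σ => ∫ u in (0:ℝ)..σ, φ u y) (φ τ y) τ := by
      intro τ
      exact intervalIntegral.integral_hasDerivAt_right (hFint 0 τ)
        ((hγc y).stronglyMeasurable.stronglyMeasurableAtFilter) (hγc y).continuousAt
    have hG : HasDerivAt (fun σ => ∫ u in σ..(σ+T₀), φ u y) (φ (t+T₀) y - φ t y) t := by
      have e1 : (fun σ => ∫ u in σ..(σ+T₀), φ u y) =
          fun σ => (∫ u in (0:ℝ)..(σ+T₀), φ u y) - ∫ u in (0:ℝ)..σ, φ u y := by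
        funext σ
        rw [eq_sub_iff_add_eq, add_comm, intervalIntegral.integral_add_adjacent_intervals
          (hFint 0 σ) (hFint σ (σ+T₀))]
      rw [e1]
      have h1 : HasDerivAt (fun σ : ℝ => ∫ u in (0:ℝ)..(σ+T₀), φ u y) (φ (t+T₀) y) t := by
        have hcomp := (hF (t+T₀)).scomp t ((hasDerivAt_id t).add_const T₀)
        simpa [Function.comp_def] using hcomp
      exact h1.sub (hF t)
    have hrw : (fun s => φ s y) = fun s => Cinv ((∫ u in s..(s+T₀), φ u y) - v0) :=
      funext fun s => hrep y s
    rw [hrw]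
    have hd := Cinv.hasFDerivAt.comp_hasDerivAt t (hG.sub_const v0)
    have hval : Cinv (φ (t+T₀) y - φ t y) = K (φ t y) + v := by
      have : φ (t+T₀) y = T T₀ (φ t y) + φ T₀ 0 := by
        rw [hT, add_comm t T₀, hadd]; abel
      rw [this, hKdef, hvdef]
      simp only [ContinuousLinearMap.coe_comp', Function.comp_apply,
        ContinuousLinearMap.coe_sub', Pi.sub_apply, ContinuousLinearMap.one_apply]
      rw [← map_add]
      congr 1
      abel
    rw [← hval]
    exact hd
  refine ⟨K, v, ?_, hderiv⟩
  intro w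
  have hφ0 : ∀ z : E3, φ 0 z = z := fun z => by rw [h0]; rfl
  have hh : ∀ t : ℝ, HasDerivAt (fun t => φ t w - φ t 0) (K (φ t w - φ t 0)) t := by
    intro t
    have := (hderiv w t).sub (hderiv 0 t)
    have he : K (φ t w) + v - (K (φ t 0) + v) = K (φ t w - φ t 0) := by
      rw [map_sub]; abel
    rw [← he]
    exact this
  have hconst : (fun t => ⟪φ t w - φ t 0, φ t w - φ t 0⟫) = fun _ => ⟪w - (0:E3), w - 0⟫ := by
    funext t
    rw [real_inner_self_eq_norm_mul_norm, real_inner_self_eq_norm_mul_norm]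
    have : ‖φ t w - φ t 0‖ = ‖w - (0:E3)‖ := by
      rw [← dist_eq_norm, ← dist_eq_norm, IsometryEquiv.dist_eq]
    rw [this]
  have hgd : HasDerivAt (fun t => ⟪φ t w - φ t 0, φ t w - φ t 0⟫)
      (⟪φ 0 w - φ 0 0, K (φ 0 w - φ 0 0)⟫ + ⟪K (φ 0 w - φ 0 0), φ 0 w - φ 0 0⟫) 0 :=
    (hh 0).inner ℝ (hh 0)
  rw [hconst] at hgd
  have hz := hgd.unique (hasDerivAt_const 0 _)
  simp only [hφ0, sub_zero] at hz
  have hcomm : ⟪w, K w⟫ = ⟪K w, w⟫ := real_inner_comm _ _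
  linarith [hz, hcomm]

theorem skew_polar (K : E3 →L[ℝ] E3) (hK : ∀ w : E3, ⟪K w, w⟫ = 0) (x y : E3) :
    ⟪K x, y⟫ = -⟪x, K y⟫ := by
  have h := hK (x + y)
  rw [map_add] at h
  simp only [inner_add_left, inner_add_right] at h
  have hx := hK x
  have hy := hK y
  have hc : ⟪K y, x⟫ = ⟪x, K y⟫ := real_inner_comm _ _
  linarith

theorem ode_uniq (K : E3 →L[ℝ] E3) (hK : ∀ w : E3, ⟪K w, w⟫ = 0) (v : E3) (γ₁ γ₂ : ℝ → E3)
    (h₁ : ∀ t, HasDerivAt γ₁ (K (γ₁ t) + v) t) (h₂ : ∀ t, HasDerivAt γ₂ (K (γ₂ t) + v) t)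
    (h0 : γ₁ 0 = γ₂ 0) : γ₁ = γ₂ := by
  have hd : ∀ t, HasDerivAt (fun t => γ₁ t - γ₂ t) (K (γ₁ t - γ₂ t)) t := by
    intro t
    have h := (h₁ t).sub (h₂ t)
    have he : K (γ₁ t) + v - (K (γ₂ t) + v) = K (γ₁ t - γ₂ t) := by
      rw [map_sub]; abel
    rw [← he]; exact h
  have hg : ∀ t, HasDerivAt (fun t => ⟪γ₁ t - γ₂ t, γ₁ t - γ₂ t⟫) 0 t := by
    intro t
    have h := (hd t).inner ℝ (hd t)
    have hz : ⟪γ₁ t - γ₂ t, K (γ₁ t - γ₂ t)⟫ + ⟪K (γ₁ t - γ₂ t), γ₁ t - γ₂ t⟫ = 0 := by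
      have := hK (γ₁ t - γ₂ t)
      have hcomm := real_inner_comm (γ₁ t - γ₂ t) (K (γ₁ t - γ₂ t))
      linarith
    rw [hz] at h; exact h
  have hconst : ∀ t : ℝ, ⟪γ₁ t - γ₂ t, γ₁ t - γ₂ t⟫ = ⟪γ₁ 0 - γ₂ 0, γ₁ 0 - γ₂ 0⟫ := by
    intro t
    exact is_const_of_deriv_eq_zero (fun s => (hg s).differentiableAt)
      (fun s => (hg s).deriv) t 0
  funext t
  have h := hconst t
  rw [h0, sub_self] at h
  simp only [inner_zero_left] at h
  have := inner_self_eq_zero.mp h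
  exact sub_eq_zero.mp this

theorem exists_onb (v : Fin 3 → E3) (hv : Orthonormal ℝ v) :
    ∃ b : OrthonormalBasis (Fin 3) ℝ E3, ∀ i, b i = v i := by
  obtain ⟨b, hb⟩ := Orthonormal.exists_orthonormalBasis_extension_of_card_eq (𝕜 := ℝ)
    (by simp) (v := v) (s := Set.univ)
    (hv.comp _ Subtype.val_injective)
  exact ⟨b, fun i => hb i trivial⟩

theorem orthonormal_triple {u : Fin 3 → E3} (h0 : ‖u 0‖ = 1) (h1 : ‖u 1‖ = 1) (h2 : ‖u 2‖ = 1)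
    (h01 : ⟪u 0, u 1⟫ = 0) (h02 : ⟪u 0, u 2⟫ = 0) (h12 : ⟪u 1, u 2⟫ = 0) :
    Orthonormal ℝ u := by
  rw [orthonormal_iff_ite]
  have d0 : ⟪u 0, u 0⟫ = 1 := by rw [real_inner_self_eq_norm_mul_norm, h0]; norm_num
  have d1 : ⟪u 1, u 1⟫ = 1 := by rw [real_inner_self_eq_norm_mul_norm, h1]; norm_num
  have d2 : ⟪u 2, u 2⟫ = 1 := by rw [real_inner_self_eq_norm_mul_norm, h2]; norm_num
  have h10 : ⟪u 1, u 0⟫ = 0 := by rw [real_inner_comm]; exact h01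
  have h20 : ⟪u 2, u 0⟫ = 0 := by rw [real_inner_comm]; exact h02
  have h21 : ⟪u 2, u 1⟫ = 0 := by rw [real_inner_comm]; exact h12
  intro i j
  fin_cases i <;> fin_cases j <;>
    simp_all

theorem range_helix (u : Fin 3 → E3) (hu : Orthonormal ℝ u) (X₀ : E3) (r c ω : ℝ)
    (hω : ω ≠ 0) (γ : ℝ → E3)
    (hγ : ∀ t, γ t = X₀ + (r * Real.cos (ω*t)) • u 0 + (r * Real.sin (ω*t)) • u 1
      + (c*(ω*t)) • u 2) :
    ∃ ψ : E3 ≃ᵢ E3, Set.range γ =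
      ψ '' (Set.range fun t : ℝ => (WithLp.toLp 2 ![r * Real.cos t, r * Real.sin t, c * t] : E3)) := by
  obtain ⟨b, hb⟩ := exists_onb u hu
  refine ⟨(b.repr.symm.toIsometryEquiv).trans (IsometryEquiv.addLeft X₀), ?_⟩
  set ψ := (b.repr.symm.toIsometryEquiv).trans (IsometryEquiv.addLeft X₀) with hψdef
  have hψ : ∀ s : ℝ, ψ (WithLp.toLp 2 ![r * Real.cos s, r * Real.sin s, c * s] : E3) =
      X₀ + (r * Real.cos s) • u 0 + (r * Real.sin s) • u 1 + (c*s) • u 2 := by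
    intro s
    have hrepr : b.repr.symm (WithLp.toLp 2 ![r * Real.cos s, r * Real.sin s, c * s] : E3) =
        ∑ i : Fin 3, (WithLp.toLp 2 ![r * Real.cos s, r * Real.sin s, c * s] : E3) i • b i :=
      (b.sum_repr_symm _).symm
    have : ψ (WithLp.toLp 2 ![r * Real.cos s, r * Real.sin s, c * s] : E3) =
        X₀ + b.repr.symm (WithLp.toLp 2 ![r * Real.cos s, r * Real.sin s, c * s] : E3) := rfl
    rw [this, hrepr, Fin.sum_univ_three]
    simp only [hb]
    show X₀ + (![r * Real.cos s, r * Real.sin s, c * s] 0 • u 0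
      + ![r * Real.cos s, r * Real.sin s, c * s] 1 • u 1
      + ![r * Real.cos s, r * Real.sin s, c * s] 2 • u 2) = _
    simp only [Matrix.cons_val_zero, Matrix.cons_val_one, Matrix.head_cons,
      Matrix.cons_val_two, Matrix.tail_cons]
    abel
  ext z
  simp only [Set.mem_range, Set.mem_image]
  constructor
  · rintro ⟨t, rfl⟩
    exact ⟨_, ⟨ω*t, rfl⟩, by rw [hψ, ← hγ]⟩
  · rintro ⟨-, ⟨s, rfl⟩, rfl⟩
    refine ⟨s/ω, ?_⟩
    rw [hγ, mul_div_cancel₀ _ hω, hψ]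

theorem skew_kernel (K : E3 →L[ℝ] E3) (hK : ∀ w : E3, ⟪K w, w⟫ = 0) (hKne : K ≠ 0) :
    ∃ e : E3, ‖e‖ = 1 ∧ K e = 0 := by
  classical
  set δ : Fin 3 → E3 := fun i => EuclideanSpace.single i (1:ℝ) with hδdef
  have hbasis : ∀ i, (EuclideanSpace.basisFun (Fin 3) ℝ) i = δ i := fun i =>
    EuclideanSpace.basisFun_apply _ _ _
  set m : Fin 3 → Fin 3 → ℝ := fun i j => ⟪K (δ i), δ j⟫ with hmdef
  have hmskew : ∀ i j, m i j = - m j i := by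
    intro i j
    have h := skew_polar K hK (δ i) (δ j)
    rw [hmdef]
    simp only []
    rw [h, real_inner_comm]
  have hmdiag : ∀ i, m i i = 0 := fun i => hK (δ i)
  set a : E3 := (m 1 2) • δ 0 + (m 2 0) • δ 1 + (m 0 1) • δ 2 with hadef
  have hKa : K a = 0 := by
    have hrep := (EuclideanSpace.basisFun (Fin 3) ℝ).sum_repr' (K a)
    rw [Fin.sum_univ_three] at hrep
    simp only [hbasis] at hrep
    have hcoef : ∀ i : Fin 3, ⟪δ i, K a⟫ = - ⟪K (δ i), a⟫ := by
      intro i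
      rw [real_inner_comm, skew_polar K hK, real_inner_comm]
    have hexp : ∀ i : Fin 3, ⟪K (δ i), a⟫ =
        m 1 2 * m i 0 + m 2 0 * m i 1 + m 0 1 * m i 2 := by
      intro i
      rw [hadef]
      simp only [inner_add_right, real_inner_smul_right]
      try rfl
    have h0 : ⟪δ 0, K a⟫ = 0 := by
      rw [hcoef, hexp, hmdiag 0, hmskew 0 2]
      try ring
    have h1 : ⟪δ 1, K a⟫ = 0 := by
      rw [hcoef, hexp, hmdiag 1, hmskew 1 0]; ring
    have h2 : ⟪δ 2, K a⟫ = 0 := by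
      rw [hcoef, hexp, hmdiag 2, hmskew 2 1]; ring
    rw [← hrep, h0, h1, h2]
    simp
  have hane : a ≠ 0 := by
    intro ha
    apply hKne
    have hm120 : m 1 2 = 0 ∧ m 2 0 = 0 ∧ m 0 1 = 0 := by
      have hdelta : ∀ i j : Fin 3, ⟪δ i, δ j⟫ = if i = j then (1:ℝ) else 0 := by
        intro i j
        rw [hδdef]
        simp only []
        rw [EuclideanSpace.inner_single_left]
        simp [EuclideanSpace.single_apply, eq_comm]
      have hdelta00 : ⟪δ 0, δ 0⟫ = (1:ℝ) := by rw [hdelta, if_pos rfl]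
      have hdelta01 : ⟪δ 0, δ 1⟫ = (0:ℝ) := by rw [hdelta, if_neg (by decide)]
      have hdelta02 : ⟪δ 0, δ 2⟫ = (0:ℝ) := by rw [hdelta, if_neg (by decide)]
      have hdelta10 : ⟪δ 1, δ 0⟫ = (0:ℝ) := by rw [hdelta, if_neg (by decide)]
      have hdelta11 : ⟪δ 1, δ 1⟫ = (1:ℝ) := by rw [hdelta, if_pos rfl]
      have hdelta12 : ⟪δ 1, δ 2⟫ = (0:ℝ) := by rw [hdelta, if_neg (by decide)]
      have hdelta20 : ⟪δ 2, δ 0⟫ = (0:ℝ) := by rw [hdelta, if_neg (by decide)]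
      have hdelta21 : ⟪δ 2, δ 1⟫ = (0:ℝ) := by rw [hdelta, if_neg (by decide)]
      have hdelta22 : ⟪δ 2, δ 2⟫ = (1:ℝ) := by rw [hdelta, if_pos rfl]
      have h0 : ⟪δ 0, a⟫ = m 1 2 := by
        rw [hadef]
        simp only [inner_add_right, real_inner_smul_right]
        rw [hdelta00, hdelta01, hdelta02]; ring
      have h1 : ⟪δ 1, a⟫ = m 2 0 := by
        rw [hadef]
        simp only [inner_add_right, real_inner_smul_right]
        rw [hdelta10, hdelta11, hdelta12]; ring
      have h2 : ⟪δ 2, a⟫ = m 0 1 := by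
        rw [hadef]
        simp only [inner_add_right, real_inner_smul_right]
        rw [hdelta20, hdelta21, hdelta22]; ring
      rw [ha] at h0 h1 h2
      simp only [inner_zero_right] at h0 h1 h2
      exact ⟨h0.symm, h1.symm, h2.symm⟩
    obtain ⟨hA, hB, hC⟩ := hm120
    have h21' : m 2 1 = 0 := by rw [hmskew 2 1, hA, neg_zero]
    have h02' : m 0 2 = 0 := by rw [hmskew 0 2, hB, neg_zero]
    have h10' : m 1 0 = 0 := by rw [hmskew 1 0, hC, neg_zero]
    have hmall : ∀ i j, m i j = 0 := by
      intro i j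
      fin_cases i <;> fin_cases j <;>
        first
          | exact hmdiag 0
          | exact hmdiag 1
          | exact hmdiag 2
          | exact hA
          | exact hB
          | exact hC
          | exact h21'
          | exact h02'
          | exact h10'
    have hKδ : ∀ i, K (δ i) = 0 := by
      intro i
      have hrep := (EuclideanSpace.basisFun (Fin 3) ℝ).sum_repr' (K (δ i))
      rw [Fin.sum_univ_three] at hrep
      simp only [hbasis] at hrep
      have : ∀ j : Fin 3, ⟪δ j, K (δ i)⟫ = m i j := fun j => real_inner_comm _ _
      rw [← hrep, this 0, this 1, this 2, hmall, hmall, hmall]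
      simp
    refine ContinuousLinearMap.ext fun y => ?_
    have hrep := (EuclideanSpace.basisFun (Fin 3) ℝ).sum_repr y
    rw [Fin.sum_univ_three] at hrep
    simp only [hbasis] at hrep
    rw [← hrep]
    simp only [map_add, map_smul, hKδ]
    simp
  refine ⟨‖a‖⁻¹ • a, ?_, ?_⟩
  · rw [norm_smul, norm_inv, norm_norm, inv_mul_cancel₀ (norm_ne_zero_iff.2 hane)]
  · rw [map_smul, hKa, smul_zero]

/-- The orbit of a point under a continuous one-parameter group of isometries of
Euclidean 3-space is, up to an ambient isometry, a set
{(r·cos t, r·sin t, c·t) : t ∈ ℝ}: a point, a line, a circle or a cylindrical helix. -/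
theorem orbit_one_parameter_isometry_group_R3
    (φ : ℝ → (EuclideanSpace ℝ (Fin 3) ≃ᵢ EuclideanSpace ℝ (Fin 3)))
    (h0 : φ 0 = IsometryEquiv.refl (EuclideanSpace ℝ (Fin 3)))
    (hadd : ∀ s t : ℝ, ∀ x : EuclideanSpace ℝ (Fin 3), φ (s + t) x = φ s (φ t x))
    (hcont : Continuous fun p : ℝ × EuclideanSpace ℝ (Fin 3) => φ p.1 p.2) :
    ∀ x : EuclideanSpace ℝ (Fin 3), ∃ (r c : ℝ)
      (ψ : EuclideanSpace ℝ (Fin 3) ≃ᵢ EuclideanSpace ℝ (Fin 3)), 0 ≤ r ∧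
      (Set.range fun t : ℝ => φ t x) =
        ψ '' (Set.range fun t : ℝ =>
          (WithLp.toLp 2 ![r * Real.cos t, r * Real.sin t, c * t] : EuclideanSpace ℝ (Fin 3))) := by
  intro x
  obtain ⟨K, v, hskew, hderiv⟩ := part1 φ h0 hadd hcont
  have hγ0 : ∀ y : E3, φ 0 y = y := fun y => by rw [h0]; rfl
  by_cases hK : K = 0
  · -- translation flow: φ t x = x + t • v
    have hΓd : ∀ t : ℝ, HasDerivAt (fun t : ℝ => x + t • v) (K (x + t • v) + v) t := by
      intro t
      have h1 : HasDerivAt (fun t : ℝ => x + t • v) ((1:ℝ) • v) t :=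
        ((hasDerivAt_id t).smul_const v).const_add x
      have h2 : K (x + t • v) + v = (1:ℝ) • v := by
        rw [hK]; simp
      rw [h2]; exact h1
    have heq : (fun t : ℝ => φ t x) = fun t : ℝ => x + t • v :=
      ode_uniq K hskew v _ _ (hderiv x) hΓd (by simp [hγ0])
    by_cases hv : v = 0
    · -- fixed point
      set u : Fin 3 → E3 := fun i => (EuclideanSpace.basisFun (Fin 3) ℝ) i with hudef
      have hshape : ∀ t : ℝ, φ t x = x + ((0:ℝ) * Real.cos (1*t)) • u 0
          + ((0:ℝ) * Real.sin (1*t)) • u 1 + ((0:ℝ)*((1:ℝ)*t)) • u 2 := by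
        intro t
        have := congrFun heq t
        simp only [this, hv, smul_zero, zero_mul, zero_smul, add_zero]
      obtain ⟨ψ, hψ⟩ := range_helix u ((EuclideanSpace.basisFun (Fin 3) ℝ).orthonormal)
        x 0 0 1 one_ne_zero _ hshape
      exact ⟨0, 0, ψ, le_refl 0, hψ⟩
    · -- straight line
      have hen : ‖(‖v‖⁻¹ • v : E3)‖ = 1 := by
        rw [norm_smul, norm_inv, norm_norm, inv_mul_cancel₀ (norm_ne_zero_iff.2 hv)]
      obtain ⟨b, hb⟩ := Orthonormal.exists_orthonormalBasis_extension_of_card_eq (𝕜 := ℝ)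
        (by simp) (v := fun _ : Fin 3 => (‖v‖⁻¹ • v : E3)) (s := {(2:Fin 3)})
        (by
          constructor
          · intro i; exact hen
          · intro i j hij; exact absurd (Subsingleton.elim i j) hij)
      have hb2 : b 2 = ‖v‖⁻¹ • v := hb 2 rfl
      have hshape : ∀ t : ℝ, φ t x = x + ((0:ℝ) * Real.cos (1*t)) • b 0
          + ((0:ℝ) * Real.sin (1*t)) • b 1 + (‖v‖*((1:ℝ)*t)) • b 2 := by
        intro t
        have h1 := congrFun heq t
        simp only [h1, zero_mul, zero_smul, add_zero, hb2, one_mul]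
        rw [smul_smul]
        congr 1
        rw [mul_comm ‖v‖ t, mul_assoc, mul_inv_cancel₀ (norm_ne_zero_iff.2 hv), mul_one]
      obtain ⟨ψ, hψ⟩ := range_helix b b.orthonormal x 0 ‖v‖ 1 one_ne_zero _ hshape
      exact ⟨0, ‖v‖, ψ, le_refl 0, hψ⟩
  · -- rotational part nonzero
    obtain ⟨e, hee, hKe⟩ := skew_kernel K hskew hK
    obtain ⟨b', hb'⟩ := Orthonormal.exists_orthonormalBasis_extension_of_card_eq (𝕜 := ℝ)
      (by simp) (v := fun _ : Fin 3 => e) (s := {(2:Fin 3)})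
      (by
        constructor
        · intro i; exact hee
        · intro i j hij; exact absurd (Subsingleton.elim i j) hij)
    have hb'2 : b' 2 = e := hb' 2 rfl
    -- find f₁ with K f₁ ≠ 0 among b' 0, b' 1
    have hexf : ∃ f₁ : E3, ‖f₁‖ = 1 ∧ ⟪e, f₁⟫ = 0 ∧ K f₁ ≠ 0 := by
      by_cases hb0 : K (b' 0) = 0
      · by_cases hb1 : K (b' 1) = 0
        · exfalso
          apply hK
          have hKb : ∀ i : Fin 3, K (b' i) = 0 := by
            intro i
            fin_cases i
            · exact hb0
            · exact hb1
            · show K (b' 2) = 0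
              rw [hb'2]; exact hKe
          refine ContinuousLinearMap.ext fun y => ?_
          have hrep := b'.sum_repr' y
          rw [Fin.sum_univ_three] at hrep
          rw [← hrep]
          simp only [map_add, map_smul, hKb]
          simp
        · refine ⟨b' 1, b'.orthonormal.1 1, ?_, hb1⟩
          rw [← hb'2]
          exact b'.orthonormal.2 (by decide : (2:Fin 3) ≠ 1)
      · refine ⟨b' 0, b'.orthonormal.1 0, ?_, hb0⟩
        rw [← hb'2]
        exact b'.orthonormal.2 (by decide : (2:Fin 3) ≠ 0)
    obtain ⟨f₁, hf₁n, hef₁, hKf₁ne⟩ := hexf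
    obtain ⟨ω, hωdef⟩ : ∃ ω : ℝ, ω = ‖K f₁‖ := ⟨_, rfl⟩
    have hω : 0 < ω := by rw [hωdef]; exact norm_pos_iff.2 hKf₁ne
    obtain ⟨f₂, hf₂def⟩ : ∃ f₂ : E3, f₂ = ω⁻¹ • K f₁ := ⟨_, rfl⟩
    have hKf₁ : K f₁ = ω • f₂ := by
      rw [hf₂def, smul_smul, mul_inv_cancel₀ hω.ne', one_smul]
    have hf₂n : ‖f₂‖ = 1 := by
      rw [hf₂def, norm_smul, norm_inv, Real.norm_eq_abs, abs_of_pos hω, ← hωdef,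
        inv_mul_cancel₀ hω.ne']
    have hf₁f₂ : ⟪f₁, f₂⟫ = 0 := by
      rw [hf₂def, real_inner_smul_right]
      have : ⟪f₁, K f₁⟫ = 0 := by rw [real_inner_comm]; exact hskew f₁
      rw [this, mul_zero]
    have hef₂ : ⟪e, f₂⟫ = 0 := by
      rw [hf₂def, real_inner_smul_right]
      have h1 : ⟪K e, f₁⟫ = -⟪e, K f₁⟫ := skew_polar K hskew e f₁
      rw [hKe] at h1
      simp only [inner_zero_left] at h1
      have : ⟪e, K f₁⟫ = 0 := by linarith
      rw [this, mul_zero]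
    have hf₁e : ⟪f₁, e⟫ = 0 := by rw [real_inner_comm]; exact hef₁
    have hf₂e : ⟪f₂, e⟫ = 0 := by rw [real_inner_comm]; exact hef₂
    have huon : Orthonormal ℝ ![f₁, f₂, e] := by
      apply orthonormal_triple <;>
        simp only [Matrix.cons_val_zero, Matrix.cons_val_one, Matrix.head_cons,
          Matrix.cons_val_two, Matrix.tail_cons] <;>
        assumption
    obtain ⟨B, hB⟩ := exists_onb _ huon
    have hB0 : B 0 = f₁ := by rw [hB]; rfl
    have hB1 : B 1 = f₂ := by rw [hB]; rfl
    have hB2 : B 2 = e := by rw [hB]; rfl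
    have hff : ⟪f₁, f₁⟫ = (1:ℝ) := by
      rw [real_inner_self_eq_norm_mul_norm, hf₁n]; norm_num
    have hgg : ⟪f₂, f₂⟫ = (1:ℝ) := by
      rw [real_inner_self_eq_norm_mul_norm, hf₂n]; norm_num
    have hf₂f₁ : ⟪f₂, f₁⟫ = 0 := by rw [real_inner_comm]; exact hf₁f₂
    have hKf₂ : K f₂ = (-ω) • f₁ := by
      have hrep := B.sum_repr' (K f₂)
      rw [Fin.sum_univ_three, hB0, hB1, hB2] at hrep
      have c0 : ⟪f₁, K f₂⟫ = -ω := by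
        have h1 : ⟪K f₁, f₂⟫ = -⟪f₁, K f₂⟫ := skew_polar K hskew f₁ f₂
        rw [hKf₁, real_inner_smul_left, hgg, mul_one] at h1
        linarith
      have c1 : ⟪f₂, K f₂⟫ = 0 := by rw [real_inner_comm]; exact hskew f₂
      have c2 : ⟪e, K f₂⟫ = 0 := by
        have h1 : ⟪K e, f₂⟫ = -⟪e, K f₂⟫ := skew_polar K hskew e f₂
        rw [hKe] at h1
        simp only [inner_zero_left] at h1
        linarith
      rw [c0, c1, c2] at hrep
      rw [← hrep]
      simp
    -- coordinates
    obtain ⟨a₀, ha₀⟩ : ∃ a : ℝ, a = ⟪f₁, v⟫ := ⟨_, rfl⟩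
    obtain ⟨a₁, ha₁⟩ : ∃ a : ℝ, a = ⟪f₂, v⟫ := ⟨_, rfl⟩
    obtain ⟨a₂, ha₂⟩ : ∃ a : ℝ, a = ⟪e, v⟫ := ⟨_, rfl⟩
    obtain ⟨ξ₀, hξ₀⟩ : ∃ a : ℝ, a = ⟪f₁, x⟫ := ⟨_, rfl⟩
    obtain ⟨ξ₁, hξ₁⟩ : ∃ a : ℝ, a = ⟪f₂, x⟫ := ⟨_, rfl⟩
    obtain ⟨ξ₂, hξ₂⟩ : ∃ a : ℝ, a = ⟪e, x⟫ := ⟨_, rfl⟩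
    have hv : v = a₀ • f₁ + a₁ • f₂ + a₂ • e := by
      have hrep := B.sum_repr' v
      rw [Fin.sum_univ_three, hB0, hB1, hB2] at hrep
      rw [ha₀, ha₁, ha₂]
      exact hrep.symm
    have hx : x = ξ₀ • f₁ + ξ₁ • f₂ + ξ₂ • e := by
      have hrep := B.sum_repr' x
      rw [Fin.sum_univ_three, hB0, hB1, hB2] at hrep
      rw [hξ₀, hξ₁, hξ₂]
      exact hrep.symm
    obtain ⟨c₀, hc₀⟩ : ∃ c₀ : ℝ, c₀ * ω = -a₁ := ⟨-a₁/ω, by field_simp⟩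
    obtain ⟨c₁, hc₁⟩ : ∃ c₁ : ℝ, c₁ * ω = a₀ := ⟨a₀/ω, by field_simp⟩
    obtain ⟨p₀, hp₀⟩ : ∃ a : ℝ, a = ξ₀ - c₀ := ⟨_, rfl⟩
    obtain ⟨p₁, hp₁⟩ : ∃ a : ℝ, a = ξ₁ - c₁ := ⟨_, rfl⟩
    obtain ⟨P, hPdef⟩ : ∃ P : E3, P = p₀ • f₁ + p₁ • f₂ := ⟨_, rfl⟩
    obtain ⟨Q, hQdef⟩ : ∃ Q : E3, Q = (-p₁) • f₁ + p₀ • f₂ := ⟨_, rfl⟩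
    obtain ⟨X₀, hX₀def⟩ : ∃ X : E3, X = c₀ • f₁ + c₁ • f₂ + ξ₂ • e := ⟨_, rfl⟩
    obtain ⟨Γ, hΓdef⟩ : ∃ Γ : ℝ → E3, Γ = fun t => X₀ + (Real.cos (ω*t)) • P
      + (Real.sin (ω*t)) • Q + (a₂ * t) • e := ⟨_, rfl⟩
    have hΓd : ∀ t : ℝ, HasDerivAt Γ (K (Γ t) + v) t := by
      intro t
      have hm : HasDerivAt (fun s : ℝ => ω*s) ω t := by
        simpa using (hasDerivAt_id t).const_mul ω
      have hat : HasDerivAt (fun s : ℝ => a₂*s) a₂ t := by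
        simpa using (hasDerivAt_id t).const_mul a₂
      have hD : HasDerivAt Γ ((-Real.sin (ω*t) * ω) • P + (Real.cos (ω*t) * ω) • Q
          + a₂ • e) t := by
        rw [hΓdef]
        exact (((hm.cos.smul_const P).const_add X₀).add (hm.sin.smul_const Q)).add
          (hat.smul_const e)
      have hval : (-Real.sin (ω*t) * ω) • P + (Real.cos (ω*t) * ω) • Q + a₂ • e
          = K (Γ t) + v := by
        rw [hΓdef]
        simp only [hPdef, hQdef, hX₀def, map_add, map_smul, hKf₁, hKf₂, hKe, hv, smul_zero]
        match_scalars <;>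
          first
            | ring1
            | linear_combination hc₀
            | linear_combination -hc₀
            | linear_combination hc₁
            | linear_combination -hc₁
      rw [← hval]
      exact hD
    have hΓ0 : Γ 0 = x := by
      rw [hΓdef]
      simp only [mul_zero, Real.cos_zero, Real.sin_zero, one_smul, zero_smul, add_zero,
        smul_zero, zero_mul]
      rw [hx, hX₀def, hPdef]
      match_scalars <;>
        first
          | ring1
          | linear_combination hp₀
          | linear_combination -hp₀
          | linear_combination hp₁
          | linear_combination -hp₁
    have heq : (fun t : ℝ => φ t x) = Γ :=
      ode_uniq K hskew v _ Γ (hderiv x) hΓd (by rw [hγ0]; exact hΓ0.symm)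
    -- inner product facts for P, Q
    have hcombo : ∀ α β α' β' : ℝ, ⟪α•f₁+β•f₂, α'•f₁+β'•f₂⟫ = α*α'+β*β' := by
      intro α β α' β'
      simp only [inner_add_left, inner_add_right, real_inner_smul_left,
        real_inner_smul_right, hff, hgg, hf₁f₂, hf₂f₁]
      ring
    have hecombo : ∀ α β : ℝ, ⟪e, α•f₁+β•f₂⟫ = 0 := by
      intro α β
      simp only [inner_add_right, real_inner_smul_right, hef₁, hef₂]
      ring
    obtain ⟨r, hrdef⟩ : ∃ r : ℝ, r = ‖P‖ := ⟨_, rfl⟩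
    by_cases hP0 : P = 0
    · -- circle degenerates to vertical line / point
      have hp₀0 : p₀ = 0 := by
        have h1 : ⟪f₁, P⟫ = p₀ := by
          rw [hPdef]
          simp only [inner_add_right, real_inner_smul_right, hff, hf₁f₂]; ring
        rw [hP0, inner_zero_right] at h1; linarith
      have hp₁0 : p₁ = 0 := by
        have h1 : ⟪f₂, P⟫ = p₁ := by
          rw [hPdef]
          simp only [inner_add_right, real_inner_smul_right, hgg, hf₂f₁]; ring
        rw [hP0, inner_zero_right] at h1; linarith
      have hQ0 : Q = 0 := by
        rw [hQdef, hp₀0, hp₁0]; simp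
      have hshape : ∀ t : ℝ, φ t x = X₀ + ((0:ℝ) * Real.cos (ω*t)) • f₁
          + ((0:ℝ) * Real.sin (ω*t)) • f₂ + ((a₂/ω)*(ω*t)) • e := by
        intro t
        have h1 := congrFun heq t
        have hsc : (a₂/ω)*(ω*t) = a₂*t := by field_simp
        rw [h1, hΓdef]
        simp only [hP0, hQ0, smul_zero, add_zero, zero_mul, zero_smul, hsc]
      obtain ⟨ψ, hψ⟩ := range_helix ![f₁, f₂, e] huon X₀ 0 (a₂/ω) ω hω.ne' _
        (by
          intro t
          have := hshape t
          simpa using this)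
      exact ⟨0, a₂/ω, ψ, le_refl 0, hψ⟩
    · -- genuine circle or helix
      have hr : 0 < r := by rw [hrdef]; exact norm_pos_iff.2 hP0
      obtain ⟨u₀, hu₀def⟩ : ∃ u : E3, u = r⁻¹ • P := ⟨_, rfl⟩
      obtain ⟨u₁, hu₁def⟩ : ∃ u : E3, u = r⁻¹ • Q := ⟨_, rfl⟩
      have hPP : ⟪P, P⟫ = p₀^2 + p₁^2 := by
        rw [hPdef, hcombo]; ring
      have hQQ : ⟪Q, Q⟫ = p₀^2 + p₁^2 := by
        rw [hQdef, hcombo]; ring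
      have hPQ : ⟪P, Q⟫ = 0 := by
        rw [hPdef, hQdef, hcombo]; ring
      have hQn : ‖Q‖ = r := by
        have h1 : ‖Q‖ * ‖Q‖ = ‖P‖ * ‖P‖ := by
          rw [← real_inner_self_eq_norm_mul_norm, ← real_inner_self_eq_norm_mul_norm,
            hPP, hQQ]
        nlinarith [norm_nonneg Q, norm_nonneg P, hrdef]
      have hu₀n : ‖u₀‖ = 1 := by
        rw [hu₀def, norm_smul, norm_inv, Real.norm_eq_abs, abs_of_pos hr, ← hrdef,
          inv_mul_cancel₀ hr.ne']
      have hu₁n : ‖u₁‖ = 1 := by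
        rw [hu₁def, norm_smul, norm_inv, Real.norm_eq_abs, abs_of_pos hr, hQn,
          inv_mul_cancel₀ hr.ne']
      have hu₀u₁ : ⟪u₀, u₁⟫ = 0 := by
        rw [hu₀def, hu₁def, real_inner_smul_left, real_inner_smul_right, hPQ]
        ring
      have hu₀e : ⟪u₀, e⟫ = 0 := by
        rw [hu₀def, real_inner_smul_left, real_inner_comm, hPdef, hecombo]
        ring
      have hu₁e : ⟪u₁, e⟫ = 0 := by
        rw [hu₁def, real_inner_smul_left, real_inner_comm, hQdef, hecombo]
        ring
      have huon' : Orthonormal ℝ ![u₀, u₁, e] := by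
        apply orthonormal_triple <;>
          simp only [Matrix.cons_val_zero, Matrix.cons_val_one, Matrix.head_cons,
            Matrix.cons_val_two, Matrix.tail_cons] <;>
          assumption
      have hPu : P = r • u₀ := by
        rw [hu₀def, smul_smul, mul_inv_cancel₀ hr.ne', one_smul]
      have hQu : Q = r • u₁ := by
        rw [hu₁def, smul_smul, mul_inv_cancel₀ hr.ne', one_smul]
      have hshape : ∀ t : ℝ, φ t x = X₀ + (r * Real.cos (ω*t)) • u₀
          + (r * Real.sin (ω*t)) • u₁ + ((a₂/ω)*(ω*t)) • e := by
        intro t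
        have h1 := congrFun heq t
        have hsc : (a₂/ω)*(ω*t) = a₂*t := by field_simp
        rw [h1, hΓdef]
        simp only [hsc, hPu, hQu, smul_smul]
        rw [mul_comm (Real.cos (ω*t)) r, mul_comm (Real.sin (ω*t)) r]
      obtain ⟨ψ, hψ⟩ := range_helix ![u₀, u₁, e] huon' X₀ r (a₂/ω) ω hω.ne' _
        (by
          intro t
          have := hshape t
          simpa using this)
      exact ⟨r, a₂/ω, ψ, hrdef ▸ norm_nonneg P, hψ⟩
end
end

section
/- Let φ : ℝ → Isom(ℝ˛) be a one-parameter group of isometries of the Euclidean plane, i.e. φ(0) is the identity, φ(s + t) = φ(s) ∘ φ(t) for all s, t ∈ ℝ, and the map (t, x) ↦ φ(t)(x) is continuous. Then for every point x of the plane, the orbit {φ(t)(x) : t ∈ ℝ} is either a full circle about some center z — namely the set of all points at distance dist(x, z) from z — or a line through x, i.e. a set of the form {x + t·v : t ∈ ℝ} for some vector v (a single point when v = 0). -/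
open Complex Set Metric

lemma orbitAux_zpow (a : ℝ → ℂ) (h0 : a 0 = 1)
    (hmul : ∀ s t, a (s + t) = a s * a t) :
    ∀ (n : ℤ) (t : ℝ), a (n * t) = a t ^ n := by
  have hpow : ∀ (n : ℕ) (t : ℝ), a (n * t) = a t ^ n := by
    intro n t
    induction n with
    | zero => simpa using h0
    | succ k ih =>
      have h : ((k : ℝ) + 1) * t = k * t + t := by ring
      rw [Nat.cast_succ, h, hmul, ih, pow_succ]
  have hinv : ∀ t, a (-t) = (a t)⁻¹ := by
    intro t
    have h : a t * a (-t) = 1 := by rw [← hmul]; simpa using h0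
    exact eq_inv_of_mul_eq_one_left (by rw [mul_comm] at h; exact h)
  intro n t
  cases n with
  | ofNat m => exact_mod_cast hpow m t
  | negSucc m =>
    have h : ((Int.negSucc m : ℝ)) * t = -(((m+1 : ℕ) : ℝ) * t) := by push_cast; ring
    rw [h, hinv, hpow, ← zpow_natCast, ← zpow_neg]
    congr 1

lemma orbitAux_surj (a : ℝ → ℂ) (hcont : Continuous a)
    (hnorm : ∀ t, ‖a t‖ = 1) (h0 : a 0 = 1)
    (hmul : ∀ s t, a (s + t) = a s * a t)
    (t₀ : ℝ) (ht₀ : a t₀ ≠ 1) :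
    ∀ w : ℂ, ‖w‖ = 1 → ∃ t, a t = w := by
  -- positive real part near 0
  have hre : Continuous fun t => (a t).re := Complex.continuous_re.comp hcont
  have h1 : (fun t => (a t).re) ⁻¹' (Set.Ioi 0) ∈ nhds (0 : ℝ) := by
    apply hre.continuousAt.preimage_mem_nhds
    rw [h0]
    exact Ioi_mem_nhds (by norm_num)
  obtain ⟨ε, hε, hball⟩ := Metric.mem_nhds_iff.1 h1
  set ε' := ε / 2 with hε'def
  have hε' : 0 < ε' := by positivity
  have hrepos : ∀ t ∈ Set.Icc (0:ℝ) ε', 0 < (a t).re := by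
    intro t ht
    apply hball
    simp only [Metric.mem_ball, Real.dist_eq, sub_zero]
    rw [_root_.abs_of_nonneg ht.1]
    linarith [ht.2]
  -- find t₁ ∈ (0, ε'] with a t₁ ≠ 1
  have hexists : ∃ t₁, 0 < t₁ ∧ t₁ ≤ ε' ∧ a t₁ ≠ 1 := by
    by_contra hcon
    push_neg at hcon
    have hone : ∀ t, 0 < t → t ≤ ε' → a t = 1 := fun t h1 h2 => hcon t h1 h2
    have hall : ∀ s : ℝ, 0 < s → a s = 1 := by
      intro s hs
      set n : ℕ := ⌈s / ε'⌉₊ with hn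
      have hn1 : 1 ≤ n := Nat.one_le_ceil_iff.2 (by positivity)
      have hnpos : (0:ℝ) < n := by exact_mod_cast hn1
      have hle : s / n ≤ ε' := by
        rw [div_le_iff₀ hnpos]
        calc s = (s / ε') * ε' := by field_simp
        _ ≤ n * ε' := by
            apply mul_le_mul_of_nonneg_right (Nat.le_ceil _) hε'.le
        _ ≤ ε' * n := by ring_nf; rfl
      have hpos : 0 < s / n := by positivity
      have := orbitAux_zpow a h0 hmul n (s / n)
      rw [hone _ hpos hle, one_zpow] at this
      rw [← this]
      congr 1
      push_cast
      field_simp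
    have : a t₀ = 1 := by
      rcases lt_trichotomy t₀ 0 with h | h | h
      · have h2 : a (-t₀) = 1 := hall _ (by linarith)
        have h3 : a t₀ * a (-t₀) = 1 := by rw [← hmul]; simpa using h0
        rw [h2, mul_one] at h3; exact h3
      · rw [h, h0]
      · exact hall _ h
    exact ht₀ this
  obtain ⟨t₁, ht₁pos, ht₁le, ht₁ne⟩ := hexists
  -- the argument function
  set α : ℝ → ℝ := fun t => Complex.arg (a t) with hα
  have hexp : ∀ t, Complex.exp (α t * I) = a t := by
    intro t
    have := Complex.norm_mul_exp_arg_mul_I (a t)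
    rwa [hnorm t, ofReal_one, one_mul] at this
  have hαcont : ContinuousOn α (Set.Icc 0 t₁) := by
    intro t ht
    have htmem : t ∈ Set.Icc (0:ℝ) ε' := ⟨ht.1, ht.2.trans ht₁le⟩
    exact ((Complex.continuousAt_arg (Or.inl (hrepos t htmem))).comp
      hcont.continuousAt).continuousWithinAt
  have hα0 : α 0 = 0 := by simp [hα, h0]
  set c₁ := α t₁ with hc₁
  have hc₁ne : c₁ ≠ 0 := by
    intro h
    apply ht₁ne
    rw [← hexp t₁, ← hc₁, h]
    simp
  -- IVT
  have hIVT : Set.uIcc 0 c₁ ⊆ α '' Set.Icc 0 t₁ := by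
    have := intermediate_value_uIcc (f := α) (a := 0) (b := t₁)
      (by rwa [Set.uIcc_of_le ht₁pos.le])
    rwa [hα0, ← hc₁, Set.uIcc_of_le ht₁pos.le] at this
  -- main argument
  intro w hw
  set β := Complex.arg w with hβ
  have hwexp : Complex.exp (β * I) = w := by
    have := Complex.norm_mul_exp_arg_mul_I w
    rwa [hw, ofReal_one, one_mul] at this
  set N : ℕ := ⌈|β| / |c₁|⌉₊ + 1 with hN
  have hNpos : (0:ℝ) < N := by positivity
  have hNle : |β| ≤ N * |c₁| := by
    have h1 : |β| / |c₁| ≤ N := le_trans (Nat.le_ceil _) (by rw [hN]; push_cast; linarith)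
    calc |β| = (|β| / |c₁|) * |c₁| := by field_simp
    _ ≤ N * |c₁| := mul_le_mul_of_nonneg_right h1 (abs_nonneg _)
  set n : ℤ := if 0 ≤ β * c₁ then (N:ℤ) else -(N:ℤ) with hn
  have hNne : N ≠ 0 := Nat.succ_ne_zero _
  have hnne : (n:ℝ) ≠ 0 := by
    rcases le_or_gt 0 (β * c₁) with h | h
    · simp [hn, if_pos h, hNne]
    · simp [hn, if_neg (not_le.2 h), hNne]
  have hmem : β / n ∈ Set.uIcc 0 c₁ := by
    rw [Set.mem_uIcc]
    rcases lt_trichotomy c₁ 0 with hc | hc | hc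
    · right
      rcases le_or_gt 0 (β * c₁) with h | h
      · have hβle : β ≤ 0 := by
          by_contra hb; push_neg at hb; nlinarith
        have ha1 : |β| = -β := abs_of_nonpos hβle
        have ha2 : |c₁| = -c₁ := abs_of_nonpos hc.le
        simp only [hn, if_pos h, Int.cast_natCast]
        constructor
        · rw [le_div_iff₀ hNpos]; nlinarith
        · exact div_nonpos_of_nonpos_of_nonneg hβle hNpos.le
      · have hβpos : 0 < β := by
          by_contra hb; push_neg at hb; nlinarith
        have ha1 : |β| = β := abs_of_pos hβpos
        have ha2 : |c₁| = -c₁ := abs_of_nonpos hc.le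
        simp only [hn, if_neg (not_le.2 h), Int.cast_neg, Int.cast_natCast]
        rw [div_neg]
        have hkey : β / N ≤ -c₁ := by rw [div_le_iff₀ hNpos]; nlinarith
        have hnn : 0 ≤ β / N := by positivity
        constructor <;> linarith
    · exact absurd hc hc₁ne
    · left
      rcases le_or_gt 0 (β * c₁) with h | h
      · have hβge : 0 ≤ β := by
          by_contra hb; push_neg at hb; nlinarith
        have ha1 : |β| = β := abs_of_nonneg hβge
        have ha2 : |c₁| = c₁ := abs_of_pos hc
        simp only [hn, if_pos h, Int.cast_natCast]
        constructor
        · positivity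
        · rw [div_le_iff₀ hNpos]; nlinarith
      · have hβneg : β < 0 := by
          by_contra hb; push_neg at hb; nlinarith
        have ha1 : |β| = -β := abs_of_nonpos hβneg.le
        have ha2 : |c₁| = c₁ := abs_of_pos hc
        simp only [hn, if_neg (not_le.2 h), Int.cast_neg, Int.cast_natCast]
        rw [div_neg]
        have hkey : -c₁ ≤ β / N := by rw [le_div_iff₀ hNpos]; nlinarith
        have hnp : β / N ≤ 0 := div_nonpos_of_nonpos_of_nonneg hβneg.le hNpos.le
        constructor <;> linarith
  obtain ⟨t, _, htval⟩ := hIVT hmem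
  refine ⟨n * t, ?_⟩
  rw [orbitAux_zpow a h0 hmul n t, ← hexp t, htval, ← Complex.exp_int_mul]
  rw [← hwexp]
  congr 1
  push_cast
  rw [← mul_assoc]
  congr 1
  rw [mul_div_cancel₀]
  exact_mod_cast hnne


lemma orbitAux_key (ψ : ℝ → (ℂ ≃ᵢ ℂ)) (h0 : ψ 0 = IsometryEquiv.refl ℂ)
    (hadd : ∀ s t : ℝ, ∀ x : ℂ, ψ (s + t) x = ψ s (ψ t x))
    (hcont : Continuous fun p : ℝ × ℂ => ψ p.1 p.2) (x : ℂ) :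
    (∃ z : ℂ, (Set.range fun t : ℝ => ψ t x) = Metric.sphere z (dist x z)) ∨
    (∃ v : ℂ, (Set.range fun t : ℝ => ψ t x) = Set.range fun t : ℝ => x + t • v) := by
  have hψ0id : ∀ w : ℂ, ψ 0 w = w := fun w => by rw [h0]; rfl
  set L : ℝ → (ℂ ≃ₗᵢ[ℝ] ℂ) := fun t => (ψ t).toRealLinearIsometryEquiv with hLdef
  have hLa : ∀ t w, L t w = ψ t w - ψ t 0 := fun t w =>
    IsometryEquiv.toRealLinearIsometryEquiv_apply (ψ t) w
  have hclass : ∀ t, ∃ a : Circle, L t = rotation a ∨ L t = conjLIE.trans (rotation a) :=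
    fun t => linear_isometry_complex (L t)
  have hψc : ∀ w : ℂ, Continuous fun t => ψ t w := fun w =>
    hcont.comp (continuous_id.prodMk continuous_const)
  set a : ℝ → ℂ := fun t => ψ t 1 - ψ t 0 with hadef
  have haL : ∀ t, a t = L t 1 := fun t => (hLa t 1).symm
  have hane : ∀ t, a t ≠ 0 := by
    intro t
    rw [haL]
    simp only [ne_eq, ← norm_eq_zero (E := ℂ), (L t).norm_map]
    norm_num
  have habs : ∀ t, ‖a t‖ = 1 := by
    intro t
    rw [haL, (L t).norm_map, norm_one]
  have hacont : Continuous a := (hψc 1).sub (hψc 0)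
  -- orientation discriminator
  set D : ℝ → ℝ := fun t => ((ψ t I - ψ t 0) / (I * a t)).re with hDdef
  have hDcont : Continuous D := by
    apply Complex.continuous_re.comp
    exact ((hψc I).sub (hψc 0)).div
      (continuous_const.mul hacont) (fun t => mul_ne_zero I_ne_zero (hane t))
  have hD0 : D 0 = 1 := by
    simp only [hDdef, hadef, hψ0id]
    rw [sub_zero, sub_zero, mul_one, div_self I_ne_zero]
    simp
  have hDpm : ∀ t, D t = 1 ∨ D t = -1 := by
    intro t
    obtain ⟨A, hA | hA⟩ := hclass t
    · left
      have h1 : ψ t I - ψ t 0 = (A : ℂ) * I := by rw [← hLa, hA, rotation_apply]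
      have h2 : a t = (A : ℂ) := by rw [haL, hA, rotation_apply, mul_one]
      simp only [hDdef, h1, h2]
      rw [mul_comm (I : ℂ) (A : ℂ), div_self (mul_ne_zero A.coe_ne_zero I_ne_zero)]
      simp
    · right
      have h1 : ψ t I - ψ t 0 = -((A : ℂ) * I) := by
        rw [← hLa, hA]
        simp [rotation_apply, Complex.conj_I]
      have h2 : a t = (A : ℂ) := by
        rw [haL, hA]
        simp [rotation_apply]
      simp only [hDdef, h1, h2]
      rw [mul_comm (I : ℂ) (A : ℂ), neg_div, div_self (mul_ne_zero A.coe_ne_zero I_ne_zero)]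
      simp
  have hD1 : ∀ t, D t = 1 := by
    intro t
    rcases hDpm t with h | h
    · exact h
    · exfalso
      have hsub : (0:ℝ) ∈ Set.uIcc (D 0) (D t) := by
        rw [hD0, h]
        rw [Set.mem_uIcc]
        right; constructor <;> norm_num
      obtain ⟨s, _, hs⟩ := intermediate_value_uIcc (hDcont.continuousOn (s := Set.uIcc 0 t)) hsub
      rcases hDpm s with h' | h' <;> rw [hs] at h' <;> norm_num at h'
  -- multiplication form
  have hrot : ∀ t w, ψ t w = a t * w + ψ t 0 := by
    intro t w
    obtain ⟨A, hA | hA⟩ := hclass t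
    · have h2 : a t = (A : ℂ) := by rw [haL, hA, rotation_apply, mul_one]
      have h3 : L t w = (A : ℂ) * w := by rw [hA, rotation_apply]
      rw [hLa] at h3
      rw [h2]
      linear_combination h3
    · exfalso
      have h1 : ψ t I - ψ t 0 = -((A : ℂ) * I) := by
        rw [← hLa, hA]
        simp [rotation_apply, Complex.conj_I]
      have h2 : a t = (A : ℂ) := by
        rw [haL, hA]
        simp [rotation_apply]
      have : D t = -1 := by
        simp only [hDdef, h1, h2]
        rw [mul_comm (I : ℂ) (A : ℂ), neg_div, div_self (mul_ne_zero A.coe_ne_zero I_ne_zero)]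
        simp
      rw [hD1 t] at this
      norm_num at this
  have ha0 : a 0 = 1 := by simp [hadef, hψ0id]
  have he0 : ∀ s t : ℝ, ψ (s + t) 0 = a s * ψ t 0 + ψ s 0 := by
    intro s t
    rw [hadd s t 0, hrot s (ψ t 0)]
  have hahom : ∀ s t : ℝ, a (s + t) = a s * a t := by
    intro s t
    have e1 : a (s + t) * (1:ℂ) + ψ (s + t) 0 = a s * (a t * 1 + ψ t 0) + ψ s 0 := by
      rw [← hrot (s + t) 1, hadd s t 1, ← hrot t 1, hrot s (ψ t 1)]
    have e0 := he0 s t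
    linear_combination e1 - e0
  by_cases hA : ∀ t, a t = 1
  · -- translation case
    right
    have cadd : ∀ s t : ℝ, ψ (s + t) 0 = ψ s 0 + ψ t 0 := by
      intro s t
      rw [he0 s t, hA s, one_mul, add_comm]
    set F : ℝ →+ ℂ := AddMonoidHom.mk' (fun t => ψ t 0) cadd with hF
    set F' := F.toRealLinearMap (hψc 0) with hF'
    have hFc : ∀ t, F' t = ψ t 0 := by
      intro t
      rw [hF']
      show F t = ψ t 0
      rfl
    have hc : ∀ t : ℝ, ψ t 0 = t • (ψ 1 0) := by
      intro t
      rw [← hFc, ← hFc]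
      have : (t : ℝ) = t • (1:ℝ) := by simp
      rw [this, map_smul]
      simp
    refine ⟨ψ 1 0, ?_⟩
    have : (fun t : ℝ => ψ t x) = fun t : ℝ => x + t • (ψ 1 0) := by
      funext t
      rw [hrot t x, hA t, one_mul, hc t, add_comm]
    rw [this]
  · -- rotation case
    push_neg at hA
    obtain ⟨t₀, ht₀⟩ := hA
    left
    have hsub : (1 : ℂ) - a t₀ ≠ 0 := sub_ne_zero.2 (Ne.symm ht₀)
    set z : ℂ := ψ t₀ 0 / (1 - a t₀) with hzdef
    have hz0 : ψ t₀ z = z := by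
      rw [hrot t₀ z, hzdef]
      field_simp
      ring
    have hzfix : ∀ t, ψ t z = z := by
      intro t
      have hcomm : ψ t₀ (ψ t z) = ψ t z := by
        rw [← hadd t₀ t z, add_comm, hadd t t₀ z, hz0]
      have h1 : a t₀ * (ψ t z) + ψ t₀ 0 = ψ t z := by rw [← hrot]; exact hcomm
      have h2 : a t₀ * z + ψ t₀ 0 = z := by rw [← hrot]; exact hz0
      have h3 : (a t₀ - 1) * (ψ t z - z) = 0 := by linear_combination h1 - h2
      rcases mul_eq_zero.1 h3 with h | h
      · exact absurd (sub_eq_zero.1 h) ht₀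
      · exact sub_eq_zero.1 h
    have hform : ∀ t w, ψ t w = a t * (w - z) + z := by
      intro t w
      have h1 := hrot t w
      have h2 : a t * z + ψ t 0 = z := by rw [← hrot]; exact hzfix t
      linear_combination h1 + h2
    refine ⟨z, Set.Subset.antisymm ?_ ?_⟩
    · rintro p ⟨t, rfl⟩
      simp only [Metric.mem_sphere]
      rw [hform t x, Complex.dist_eq, Complex.dist_eq, add_sub_cancel_right, norm_mul,
        habs t, one_mul]
    · intro p hp
      rw [Metric.mem_sphere, Complex.dist_eq, Complex.dist_eq] at hp
      by_cases hx : x = z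
      · refine ⟨0, ?_⟩
        have hp0 : p = z := by
          rw [hx, sub_self, norm_zero, norm_eq_zero, sub_eq_zero] at hp
          exact hp
        show ψ (0:ℝ) x = p
        rw [hψ0id, hx, hp0]
      · have hxz : x - z ≠ 0 := sub_ne_zero.2 hx
        set w : ℂ := (p - z) / (x - z) with hwdef
        have habsw : ‖w‖ = 1 := by
          rw [hwdef, norm_div, hp, div_self]
          rw [ne_eq, norm_eq_zero]
          exact hxz
        obtain ⟨t, hat⟩ := orbitAux_surj a hacont habs ha0 hahom t₀ ht₀ w habsw
        refine ⟨t, ?_⟩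
        show ψ t x = p
        rw [hform t x, hat, hwdef, div_mul_cancel₀ _ hxz, sub_add_cancel]

/-- The orbit of a point under a continuous one-parameter group of isometries of
the Euclidean plane is a full circle about some center, or a line through the
point (possibly degenerate to the point itself). -/
theorem orbit_one_parameter_isometry_group_R2
    (φ : ℝ → (EuclideanSpace ℝ (Fin 2) ≃ᵢ EuclideanSpace ℝ (Fin 2)))
    (h0 : φ 0 = IsometryEquiv.refl (EuclideanSpace ℝ (Fin 2)))
    (hadd : ∀ s t : ℝ, ∀ x : EuclideanSpace ℝ (Fin 2), φ (s + t) x = φ s (φ t x))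
    (hcont : Continuous fun p : ℝ × EuclideanSpace ℝ (Fin 2) => φ p.1 p.2) :
    ∀ x : EuclideanSpace ℝ (Fin 2),
      (∃ z : EuclideanSpace ℝ (Fin 2),
          (Set.range fun t : ℝ => φ t x) = Metric.sphere z (dist x z)) ∨
      (∃ v : EuclideanSpace ℝ (Fin 2),
          (Set.range fun t : ℝ => φ t x) = Set.range fun t : ℝ => x + t • v) := by
  intro x
  set e : ℂ ≃ₗᵢ[ℝ] EuclideanSpace ℝ (Fin 2) :=
    Complex.isometryOfOrthonormal (EuclideanSpace.basisFun (Fin 2) ℝ) with hedef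
  set ψ : ℝ → (ℂ ≃ᵢ ℂ) := fun t =>
    e.toIsometryEquiv.trans ((φ t).trans e.symm.toIsometryEquiv) with hψdef
  have hψa : ∀ t w, ψ t w = e.symm (φ t (e w)) := fun t w => rfl
  have hψ0 : ψ 0 = IsometryEquiv.refl ℂ := by
    ext w
    rw [hψa, h0]
    exact e.symm_apply_apply w
  have hψadd : ∀ s t : ℝ, ∀ w : ℂ, ψ (s + t) w = ψ s (ψ t w) := by
    intro s t w
    rw [hψa, hψa, hψa, hadd]
    simp
  have hψcont : Continuous fun p : ℝ × ℂ => ψ p.1 p.2 := by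
    simp only [hψa]
    exact e.symm.continuous.comp (hcont.comp
      (continuous_fst.prodMk (e.continuous.comp continuous_snd)))
  have hfun : (fun t : ℝ => φ t x) = (⇑e ∘ fun t : ℝ => ψ t (e.symm x)) := by
    funext t
    simp [hψa]
  have hrange : (Set.range fun t : ℝ => φ t x) =
      e '' (Set.range fun t : ℝ => ψ t (e.symm x)) := by
    rw [hfun, Set.range_comp]
  rcases orbitAux_key ψ hψ0 hψadd hψcont (e.symm x) with ⟨z, hz⟩ | ⟨v, hv⟩
  · left
    refine ⟨e z, ?_⟩
    have hd : dist x (e z) = dist (e.symm x) z := by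
      rw [← e.dist_map (e.symm x) z, e.apply_symm_apply]
    have himg := e.toIsometryEquiv.image_sphere z (dist (e.symm x) z)
    rw [LinearIsometryEquiv.coe_toIsometryEquiv] at himg
    rw [hrange, hz, himg, hd]
  · right
    refine ⟨e v, ?_⟩
    have hcomp : (⇑e ∘ fun t : ℝ => e.symm x + t • v) = fun t : ℝ => x + t • e v := by
      funext t
      simp only [Function.comp_apply, map_add, map_smul, LinearIsometryEquiv.apply_symm_apply]
    rw [hrange, hv, ← Set.range_comp, hcomp]
end
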